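/- Let e be an idempotent of a finite-dimensional Jordan pair with dual bases {c_α}, {ĉ_α} compatible with the Peirce decomposition (index sets I_2, I_1, I_0). Then ∑_{α∈I_2} D_{c_α, ĉ_α} = p_2 · D_{e,e'}, where p_2 is the structure constant of the simple subpair (V_2⁺, V_2⁻) (i.e. Tr_{V_2⁺} D_{u,v} = 2p_2 τ(u,v) for u ∈ V_2⁺, v ∈ V_2⁻). -/

import Mathlib

/-- A (linear) Jordan pair over `ℝ`: a pair of modules with trilinear products,
symmetric in the outer variables, satisfying the fundamental Jordan pair identity. -/
structure JordanPair (Vp Vm : Type*) [AddCommGroup Vp] [Module ℝ Vp]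
    [AddCommGroup Vm] [Module ℝ Vm] where
  tp : Vp →ₗ[ℝ] Vm →ₗ[ℝ] Vp →ₗ[ℝ] Vp
  tm : Vm →ₗ[ℝ] Vp →ₗ[ℝ] Vm →ₗ[ℝ] Vm
  symm_p : ∀ x y z, tp x y z = tp z y x
  symm_m : ∀ x y z, tm x y z = tm z y x
  jp_p : ∀ x y u v z,
    tp x y (tp u v z) - tp u v (tp x y z) = tp (tp x y u) v z - tp u (tm y x v) z
  jp_m : ∀ y x v u w,
    tm y x (tm v u w) - tm v u (tm y x w) = tm (tm y x v) u w - tm v (tp x y u) w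

private lemma trace_eq_sum_repr' {V : Type*} [AddCommGroup V] [Module ℝ V] [Module.Finite ℝ V]
    {κ : Type*} [Fintype κ] [DecidableEq κ] (bb : Module.Basis κ ℝ V) (f : V →ₗ[ℝ] V) :
    LinearMap.trace ℝ V f = ∑ β, bb.repr (f (bb β)) β := by
  rw [LinearMap.trace_eq_matrix_trace ℝ bb f, Matrix.trace]
  simp [Matrix.diag, LinearMap.toMatrix_apply]

set_option maxHeartbeats 2000000 in
/-- **Peirce-2 part of the dual-basis sum.** Let `e = (e,e')` be an idempotent of a
finite-dimensional simple real Jordan pair with non-degenerate trace form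
`τ(x,y) = (1/2p)·Tr_{V⁺}(D_{x,y})`, and let `{c_α}`, `{ĉ_α}` be dual bases compatible with
the Peirce decomposition (index sets `I₂, I₁, I₀`).  Then
`∑_{α ∈ I₂} D_{c_α, ĉ_α} = p₂ · D_{e,e'}`, where `p₂` is the structure constant of the
simple subpair `(V₂⁺, V₂⁻)`, i.e. `Tr_{V₂⁺}(D_{u,v}) = 2p₂·τ(u,v)` for `u ∈ V₂⁺`,
`v ∈ V₂⁻`. -/
theorem jordanPair_peirce2_dual_sum {Vp Vm : Type*}
    [AddCommGroup Vp] [Module ℝ Vp] [FiniteDimensional ℝ Vp]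
    [AddCommGroup Vm] [Module ℝ Vm] [FiniteDimensional ℝ Vm]
    (J : JordanPair Vp Vm) (e : Vp) (e' : Vm)
    (he : (2⁻¹ : ℝ) • J.tp e e' e = e) (he' : (2⁻¹ : ℝ) • J.tm e' e e' = e')
    (p p2 : ℝ) (hp : 0 < p) (hp2 : 0 < p2)
    (τ : Vp → Vm → ℝ)
    (hτ : ∀ x y, τ x y = (1 / (2 * p)) * LinearMap.trace ℝ Vp (J.tp x y))
    (hnd₁ : ∀ y : Vm, (∀ x : Vp, τ x y = 0) → y = 0)
    (hnd₂ : ∀ x : Vp, (∀ y : Vm, τ x y = 0) → x = 0)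
    -- the Peirce-2 subpair and its structure constant `p₂`
    (P2 : Submodule ℝ Vp) (hP2 : P2 = LinearMap.ker (J.tp e e' - (2 : ℝ) • LinearMap.id))
    (hp2def : ∀ (u : Vp) (v : Vm), J.tp e e' u = (2 : ℝ) • u → J.tm e' e v = (2 : ℝ) • v →
      ∀ (hmaps : ∀ z ∈ P2, J.tp u v z ∈ P2),
        LinearMap.trace ℝ P2 ((J.tp u v).restrict hmaps) = 2 * p2 * τ u v)
    -- a basis of `V⁺` with dual basis of `V⁻`, compatible with the Peirce decomposition
    {ι : Type*} [Fintype ι] [DecidableEq ι]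
    (b : Module.Basis ι ℝ Vp) (cdual : ι → Vm)
    (hdual : ∀ α β, τ (b α) (cdual β) = if α = β then 1 else 0)
    (I2 I1 I0 : Finset ι)
    (hpart : ∀ α, (α ∈ I2 ∧ α ∉ I1 ∧ α ∉ I0) ∨ (α ∉ I2 ∧ α ∈ I1 ∧ α ∉ I0) ∨
      (α ∉ I2 ∧ α ∉ I1 ∧ α ∈ I0))
    (hc2 : ∀ α ∈ I2, J.tp e e' (b α) = (2 : ℝ) • b α)
    (hc1 : ∀ α ∈ I1, J.tp e e' (b α) = b α)
    (hc0 : ∀ α ∈ I0, J.tp e e' (b α) = 0) :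
    ∑ α ∈ I2, J.tp (b α) (cdual α) = p2 • J.tp e e' := by
  classical
  rcases isEmpty_or_nonempty ι with hempty | hne
  · have hsub : Subsingleton Vp := by
      by_contra h
      rw [not_subsingleton_iff_nontrivial] at h
      exact hempty.elim (Module.Basis.index_nonempty b).some
    ext x
    exact Subsingleton.elim _ _
  -- basic idempotent facts
  have h2e : J.tp e e' e = (2 : ℝ) • e := by
    linear_combination (norm := module) (2:ℝ) • he
  have h2e' : J.tm e' e e' = (2 : ℝ) • e' := by
    linear_combination (norm := module) (2:ℝ) • he'
  -- bilinearity of τ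
  have τa1 : ∀ u v w, τ (u + v) w = τ u w + τ v w := by
    intro u v w; simp [hτ, map_add, LinearMap.add_apply, mul_add]
  have τs1 : ∀ (r : ℝ) u w, τ (r • u) w = r * τ u w := by
    intro r u w; simp [hτ, map_smul, LinearMap.smul_apply]; ring
  have τsub1 : ∀ u v w, τ (u - v) w = τ u w - τ v w := by
    intro u v w; simp [hτ, map_sub, LinearMap.sub_apply, mul_sub]
  have τ01 : ∀ w, τ 0 w = 0 := by
    intro w; simp [hτ]
  have τa2 : ∀ x u v, τ x (u + v) = τ x u + τ x v := by
    intro x u v; simp [hτ, map_add, LinearMap.add_apply, mul_add]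
  have τs2 : ∀ (r : ℝ) x u, τ x (r • u) = r * τ x u := by
    intro r x u; simp [hτ, map_smul, LinearMap.smul_apply]; ring
  have τsub2 : ∀ x u v, τ x (u - v) = τ x u - τ x v := by
    intro x u v; simp [hτ, map_sub, LinearMap.sub_apply, mul_sub]
  have τ02 : ∀ x, τ x 0 = 0 := by
    intro x; simp [hτ]
  have τsum1 : ∀ (s : Finset ι) (g : ι → Vp) (w : Vm),
      τ (∑ i ∈ s, g i) w = ∑ i ∈ s, τ (g i) w := by
    intro s g w
    rw [hτ, map_sum, LinearMap.sum_apply, map_sum, Finset.mul_sum]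
    exact Finset.sum_congr rfl fun i _ => (hτ (g i) w).symm
  have τsum2 : ∀ (x : Vp) (s : Finset ι) (g : ι → Vm),
      τ x (∑ i ∈ s, g i) = ∑ i ∈ s, τ x (g i) := by
    intro x s g
    rw [hτ, map_sum, map_sum, Finset.mul_sum]
    exact Finset.sum_congr rfl fun i _ => (hτ x (g i)).symm
  -- associativity of the trace form
  have adj : ∀ x y u v, τ (J.tp x y u) v = τ u (J.tm y x v) := by
    intro x y u v
    have hop : J.tp (J.tp x y u) v - J.tp u (J.tm y x v)
        = (J.tp x y) ∘ₗ (J.tp u v) - (J.tp u v) ∘ₗ (J.tp x y) := by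
      apply LinearMap.ext; intro z
      simp only [LinearMap.sub_apply, LinearMap.comp_apply]
      exact (J.jp_p x y u v z).symm
    have htr := congrArg (LinearMap.trace ℝ Vp) hop
    rw [map_sub, map_sub] at htr
    rw [show (J.tp x y) ∘ₗ (J.tp u v) = (J.tp x y) * (J.tp u v) from rfl,
        show (J.tp u v) ∘ₗ (J.tp x y) = (J.tp u v) * (J.tp x y) from rfl,
        LinearMap.trace_mul_comm, sub_self] at htr
    rw [hτ, hτ, sub_eq_zero.mp htr]
  have adjA : ∀ u w, τ (J.tp e e' u) w = τ u (J.tm e' e w) := fun u w => adj e e' u w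
  -- eigenvalues on the basis
  set eig : ι → ℝ := fun β => if β ∈ I2 then 2 else if β ∈ I1 then 1 else 0 with heig
  have heig2 : ∀ β ∈ I2, eig β = 2 := by intro β h; simp [heig, h]
  have heigvals : ∀ β, eig β = 2 ∨ eig β = 1 ∨ eig β = 0 := by
    intro β; simp only [heig]; split_ifs <;> simp
  have heig_ne2 : ∀ β, β ∉ I2 → eig β ≠ 2 := by
    intro β h; simp only [heig, if_neg h]; split_ifs <;> norm_num
  have hAb : ∀ β, J.tp e e' (b β) = eig β • b β := by
    intro β
    rcases hpart β with ⟨h2, _, _⟩ | ⟨h2, h1, _⟩ | ⟨h2, h1, h0⟩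
    · rw [hc2 β h2]; simp [heig, h2]
    · rw [hc1 β h1]; simp [heig, h2, h1]
    · rw [hc0 β h0]; simp [heig, h2, h1]
  -- minimal polynomial on Vp
  have qAop : ∀ u, J.tp e e' (J.tp e e' (J.tp e e' u))
      = (3 : ℝ) • J.tp e e' (J.tp e e' u) - (2 : ℝ) • J.tp e e' u := by
    have hop : (J.tp e e') ∘ₗ ((J.tp e e') ∘ₗ (J.tp e e'))
        = (3 : ℝ) • ((J.tp e e') ∘ₗ (J.tp e e')) - (2 : ℝ) • (J.tp e e') := by
      apply b.ext; intro β
      simp only [LinearMap.comp_apply, LinearMap.sub_apply, LinearMap.smul_apply]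
      rw [hAb β, map_smul, hAb β, map_smul, map_smul, hAb β]
      rcases heigvals β with h | h | h <;> rw [h] <;> module
    intro u
    have := LinearMap.congr_fun hop u
    simpa only [LinearMap.comp_apply, LinearMap.sub_apply, LinearMap.smul_apply] using this
  have qA'op : ∀ w, J.tm e' e (J.tm e' e (J.tm e' e w))
      = (3 : ℝ) • J.tm e' e (J.tm e' e w) - (2 : ℝ) • J.tm e' e w := by
    intro w
    rw [← sub_eq_zero]
    apply hnd₁
    intro x
    rw [τsub2, τsub2, τs2, τs2]
    rw [← adjA, ← adjA, ← adjA, ← adjA, ← adjA, ← adjA]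
    rw [qAop x, τsub1, τs1, τs1]
    ring
  -- vanishing of eigenvectors with bad eigenvalue
  have zeroP : ∀ (m : ℝ) u, J.tp e e' u = m • u → m * (m - 1) * (m - 2) ≠ 0 → u = 0 := by
    intro m u hu hm
    have h3 := qAop u
    simp only [hu, map_smul, smul_smul] at h3
    have h4 : (m * (m - 1) * (m - 2)) • u = 0 := by
      linear_combination (norm := module) h3
    rcases smul_eq_zero.mp h4 with h | h
    · exact (hm h).elim
    · exact h
  have zeroM : ∀ (m : ℝ) w, J.tm e' e w = m • w → m * (m - 1) * (m - 2) ≠ 0 → w = 0 := by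
    intro m w hw hm
    have h3 := qA'op w
    simp only [hw, map_smul, smul_smul] at h3
    have h4 : (m * (m - 1) * (m - 2)) • w = 0 := by
      linear_combination (norm := module) h3
    rcases smul_eq_zero.mp h4 with h | h
    · exact (hm h).elim
    · exact h
  -- Peirce multiplication rules
  have Pp : ∀ (i j k : ℝ) u v w, J.tp e e' u = i • u → J.tm e' e v = j • v →
      J.tp e e' w = k • w → J.tp e e' (J.tp u v w) = (i - j + k) • J.tp u v w := by
    intro i j k u v w hu hv hw
    have h := J.jp_p e e' u v w
    rw [hu, hv, hw] at h
    simp only [map_smul, LinearMap.smul_apply] at h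
    linear_combination (norm := module) h
  have Pm : ∀ (k i j : ℝ) v u w, J.tm e' e v = k • v → J.tp e e' u = i • u →
      J.tm e' e w = j • w → J.tm e' e (J.tm v u w) = (k - i + j) • J.tm v u w := by
    intro k i j v u w hv hu hw
    have h := J.jp_m e' e v u w
    rw [hu, hv, hw] at h
    simp only [map_smul, LinearMap.smul_apply] at h
    linear_combination (norm := module) h
  -- Peirce decompositions
  have decompP : ∀ x : Vp, ∃ x0 x1 x2 : Vp, x = x0 + x1 + x2 ∧
      J.tp e e' x0 = (0 : ℝ) • x0 ∧ J.tp e e' x1 = (1 : ℝ) • x1 ∧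
      J.tp e e' x2 = (2 : ℝ) • x2 := by
    intro x
    refine ⟨x - ((2:ℝ) • J.tp e e' x - J.tp e e' (J.tp e e' x))
      - (2⁻¹ : ℝ) • (J.tp e e' (J.tp e e' x) - J.tp e e' x),
      (2:ℝ) • J.tp e e' x - J.tp e e' (J.tp e e' x),
      (2⁻¹ : ℝ) • (J.tp e e' (J.tp e e' x) - J.tp e e' x), by module, ?_, ?_, ?_⟩
    · simp only [map_sub, map_smul]
      rw [qAop x]
      module
    · simp only [map_sub, map_smul]
      rw [qAop x]
      module
    · simp only [map_sub, map_smul]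
      rw [qAop x]
      module
  have decompM : ∀ y : Vm, ∃ y0 y1 y2 : Vm, y = y0 + y1 + y2 ∧
      J.tm e' e y0 = (0 : ℝ) • y0 ∧ J.tm e' e y1 = (1 : ℝ) • y1 ∧
      J.tm e' e y2 = (2 : ℝ) • y2 := by
    intro y
    refine ⟨y - ((2:ℝ) • J.tm e' e y - J.tm e' e (J.tm e' e y))
      - (2⁻¹ : ℝ) • (J.tm e' e (J.tm e' e y) - J.tm e' e y),
      (2:ℝ) • J.tm e' e y - J.tm e' e (J.tm e' e y),
      (2⁻¹ : ℝ) • (J.tm e' e (J.tm e' e y) - J.tm e' e y), by module, ?_, ?_, ?_⟩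
    · simp only [map_sub, map_smul]
      rw [qA'op y]
      module
    · simp only [map_sub, map_smul]
      rw [qA'op y]
      module
    · simp only [map_sub, map_smul]
      rw [qA'op y]
      module
  -- the quadratic identities
  have Qid : ∀ z, J.tp e e' z = (2 : ℝ) • z → J.tp e (J.tm e' z e') e = (4 : ℝ) • z := by
    intro z hz
    have h := J.jp_p z e' e e' e
    rw [J.symm_p z e' e, hz, h2e] at h
    simp only [map_smul, LinearMap.smul_apply] at h
    rw [J.symm_p z e' e, hz] at h
    linear_combination (norm := module) h
  have Qid' : ∀ w, J.tm e' e w = (2 : ℝ) • w → J.tm e' (J.tp e w e) e' = (4 : ℝ) • w := by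
    intro w hw
    have h := J.jp_m w e e' e e'
    rw [J.symm_m w e e', hw, h2e'] at h
    simp only [map_smul, LinearMap.smul_apply] at h
    rw [J.symm_m w e e', hw] at h
    linear_combination (norm := module) h
  -- the quadratic operators and Peirce projections
  set Qe : Vm →ₗ[ℝ] Vp := (2⁻¹ : ℝ) • ((J.tp e).flip e) with hQedef
  set Qe' : Vp →ₗ[ℝ] Vm := (2⁻¹ : ℝ) • ((J.tm e').flip e') with hQe'def
  set Q2 : Vp →ₗ[ℝ] Vp :=
    (2⁻¹ : ℝ) • ((J.tp e e') ∘ₗ (J.tp e e') - (J.tp e e')) with hQ2def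
  set Q2' : Vm →ₗ[ℝ] Vm :=
    (2⁻¹ : ℝ) • ((J.tm e' e) ∘ₗ (J.tm e' e) - (J.tm e' e)) with hQ2'def
  have hQeapp : ∀ w, Qe w = (2⁻¹ : ℝ) • J.tp e w e := by
    intro w; rw [hQedef]; simp [LinearMap.flip_apply]
  have hQe'app : ∀ z, Qe' z = (2⁻¹ : ℝ) • J.tm e' z e' := by
    intro z; rw [hQe'def]; simp [LinearMap.flip_apply]
  have hQ2app : ∀ u, Q2 u = (2⁻¹ : ℝ) • (J.tp e e' (J.tp e e' u) - J.tp e e' u) := by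
    intro u; rw [hQ2def]; simp [LinearMap.sub_apply, LinearMap.comp_apply]
  have hQ2'app : ∀ w, Q2' w = (2⁻¹ : ℝ) • (J.tm e' e (J.tm e' e w) - J.tm e' e w) := by
    intro w; rw [hQ2'def]; simp [LinearMap.sub_apply, LinearMap.comp_apply]
  -- Q2 = Qe ∘ Qe'
  have hQQ : Qe ∘ₗ Qe' = Q2 := by
    apply b.ext; intro β
    rw [LinearMap.comp_apply, hQe'app, map_smul, hQeapp, hQ2app]
    rcases hpart β with ⟨h2, _, _⟩ | ⟨h2, h1, _⟩ | ⟨h2, h1, h0⟩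
    · have hb2 := hc2 β h2
      rw [Qid (b β) hb2]
      simp only [hb2, map_smul]
      module
    · have hb1 : J.tp e e' (b β) = (1 : ℝ) • b β := by rw [hc1 β h1]; module
      have hN : J.tm e' (b β) e' = 0 := by
        apply zeroM (2 - 1 + 2 : ℝ)
        · exact Pm 2 1 2 e' (b β) e' h2e' hb1 h2e'
        · norm_num
      rw [hN]
      simp only [map_zero, LinearMap.zero_apply, smul_zero, hb1, map_smul]
      module
    · have hb0 : J.tp e e' (b β) = (0 : ℝ) • b β := by rw [hc0 β h0]; module
      have hN : J.tm e' (b β) e' = 0 := by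
        apply zeroM (2 - 0 + 2 : ℝ)
        · exact Pm 2 0 2 e' (b β) e' h2e' hb0 h2e'
        · norm_num
      rw [hN]
      simp only [map_zero, LinearMap.zero_apply, smul_zero, hb0, map_smul]
      module
  -- Q2' = Qe' ∘ Qe
  have hQQ' : Qe' ∘ₗ Qe = Q2' := by
    apply LinearMap.ext; intro w
    obtain ⟨w0, w1, w2, hw, k0, k1, k2⟩ := decompM w
    have comp0 : Qe' (Qe w0) = Q2' w0 := by
      have hZ : J.tp e w0 e = 0 := by
        apply zeroP (2 - 0 + 2 : ℝ)
        · exact Pp 2 0 2 e w0 e h2e k0 h2e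
        · norm_num
      rw [hQeapp, map_smul, hZ, hQ2'app]
      simp only [map_zero, smul_zero, k0, map_smul]
      module
    have comp1 : Qe' (Qe w1) = Q2' w1 := by
      have hZ : J.tp e w1 e = 0 := by
        apply zeroP (2 - 1 + 2 : ℝ)
        · exact Pp 2 1 2 e w1 e h2e k1 h2e
        · norm_num
      rw [hQeapp, map_smul, hZ, hQ2'app]
      simp only [map_zero, smul_zero, k1, map_smul]
      module
    have comp2 : Qe' (Qe w2) = Q2' w2 := by
      rw [hQeapp, map_smul, hQe'app, Qid' w2 k2, hQ2'app]
      simp only [k2, map_smul]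
      module
    rw [hw, LinearMap.comp_apply]
    simp only [map_add]
    rw [comp0, comp1, comp2]
  -- coordinates
  have reprA : ∀ u β, b.repr (J.tp e e' u) β = eig β * b.repr u β := by
    intro u β
    have hop : (b.coord β) ∘ₗ (J.tp e e') = eig β • b.coord β := by
      apply b.ext; intro γ
      simp only [LinearMap.comp_apply, Module.Basis.coord_apply, LinearMap.smul_apply, smul_eq_mul]
      rw [hAb γ, map_smul]
      simp only [Finsupp.smul_apply, Module.Basis.repr_self, smul_eq_mul]
      by_cases h : γ = β
      · subst h; simp
      · simp [Finsupp.single_apply, h]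
    have := LinearMap.congr_fun hop u
    simpa only [LinearMap.comp_apply, Module.Basis.coord_apply, LinearMap.smul_apply,
      smul_eq_mul] using this
  have reprQ2 : ∀ u β, b.repr (Q2 u) β = if β ∈ I2 then b.repr u β else 0 := by
    intro u β
    rw [hQ2app, map_smul]
    simp only [Finsupp.smul_apply, map_sub, Finsupp.sub_apply, smul_eq_mul]
    rw [reprA, reprA]
    rcases hpart β with ⟨h2, _, _⟩ | ⟨h2, h1, _⟩ | ⟨h2, h1, h0⟩
    · rw [heig2 β h2, if_pos h2]; ring
    · have hv : eig β = 1 := by simp [heig, h2, h1]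
      rw [hv, if_neg h2]; ring
    · have hv : eig β = 0 := by simp [heig, h2, h1]
      rw [hv, if_neg h2]; ring
  have trQ2 : ∀ f : Vp →ₗ[ℝ] Vp,
      LinearMap.trace ℝ Vp (Q2 ∘ₗ f) = ∑ β ∈ I2, b.repr (f (b β)) β := by
    intro f
    rw [trace_eq_sum_repr' b]
    have hterm : ∀ β, b.repr ((Q2 ∘ₗ f) (b β)) β
        = if β ∈ I2 then b.repr (f (b β)) β else 0 := by
      intro β; rw [LinearMap.comp_apply, reprQ2]
    rw [Finset.sum_congr rfl (fun β _ => hterm β)]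
    exact Fintype.sum_ite_mem I2 _
  -- the dual family is a basis of Vm
  have reprτ : ∀ u β, b.repr u β = τ u (cdual β) := by
    intro u β
    have hop : (b.coord β)
        = (1 / (2*p)) • ((LinearMap.trace ℝ Vp) ∘ₗ ((J.tp).flip (cdual β))) := by
      apply b.ext; intro γ
      simp only [Module.Basis.coord_apply, LinearMap.smul_apply, LinearMap.comp_apply,
        LinearMap.flip_apply, smul_eq_mul]
      rw [← hτ (b γ) (cdual β), hdual γ β]
      simp [Module.Basis.repr_self, Finsupp.single_apply]
    have := LinearMap.congr_fun hop u
    simpa only [Module.Basis.coord_apply, LinearMap.smul_apply, LinearMap.comp_apply,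
      LinearMap.flip_apply, smul_eq_mul, ← hτ u (cdual β)] using this
  have linind : LinearIndependent ℝ cdual := by
    rw [Fintype.linearIndependent_iff]
    intro g hg α
    have h1 : τ (b α) (∑ i, g i • cdual i) = g α := by
      rw [τsum2]
      have h2 : ∀ i, τ (b α) (g i • cdual i) = g i * (if α = i then 1 else 0) := by
        intro i; rw [τs2, hdual]
      rw [Finset.sum_congr rfl (fun i _ => h2 i)]
      simp [mul_ite, Finset.sum_ite_eq]
    rw [hg, τ02] at h1
    exact h1.symm
  have frle : Module.finrank ℝ Vm ≤ Fintype.card ι := by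
    have hinj : Function.Injective
        (LinearMap.pi (fun α : ι => (1 / (2*p)) • ((LinearMap.trace ℝ Vp) ∘ₗ (J.tp (b α)))) :
          Vm →ₗ[ℝ] (ι → ℝ)) := by
      rw [← LinearMap.ker_eq_bot, LinearMap.ker_eq_bot']
      intro w hw
      apply hnd₁
      intro x
      have hcomp : ∀ α, τ (b α) w = 0 := by
        intro α
        have h3 := congrFun hw α
        have h4 : (1 / (2*p)) * (LinearMap.trace ℝ Vp) ((J.tp (b α)) w) = 0 := by
          simpa only [LinearMap.pi_apply, LinearMap.smul_apply, LinearMap.comp_apply,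
            smul_eq_mul, Pi.zero_apply] using h3
        rw [hτ (b α) w]
        exact h4
      calc τ x w = τ (∑ β, b.repr x β • b β) w := by rw [b.sum_repr]
        _ = ∑ β, τ (b.repr x β • b β) w := τsum1 _ _ _
        _ = ∑ β, b.repr x β * τ (b β) w := Finset.sum_congr rfl fun β _ => τs1 _ _ _
        _ = 0 := by simp [hcomp]
    calc Module.finrank ℝ Vm ≤ Module.finrank ℝ (ι → ℝ) :=
          LinearMap.finrank_le_finrank_of_injective hinj
      _ = Fintype.card ι := Module.finrank_fintype_fun_eq_card ℝ
  have cardeq : Fintype.card ι = Module.finrank ℝ Vm :=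
    le_antisymm (linind.fintype_card_le_finrank) frle
  let cb : Module.Basis ι ℝ Vm := basisOfLinearIndependentOfCardEqFinrank linind cardeq
  have hcb : ∀ β, cb β = cdual β := fun β =>
    congrFun (coe_basisOfLinearIndependentOfCardEqFinrank linind cardeq) β
  have crepr : ∀ (w : Vm) α, cb.repr w α = τ (b α) w := by
    intro w α
    have hop : (cb.coord α) = (1 / (2*p)) • ((LinearMap.trace ℝ Vp) ∘ₗ (J.tp (b α))) := by
      apply cb.ext; intro γ
      simp only [Module.Basis.coord_apply, LinearMap.smul_apply, LinearMap.comp_apply, smul_eq_mul]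
      rw [← hτ (b α) (cb γ)]
      rw [Module.Basis.repr_self_apply, hcb γ, hdual α γ]
      by_cases h : γ = α
      · simp [h]
      · rw [if_neg h, if_neg (fun hh => h hh.symm)]
    have := LinearMap.congr_fun hop w
    simpa only [Module.Basis.coord_apply, LinearMap.smul_apply, LinearMap.comp_apply,
      smul_eq_mul, ← hτ (b α) w] using this
  have trMirror : ∀ (f : Vp →ₗ[ℝ] Vp) (g : Vm →ₗ[ℝ] Vm),
      (∀ u w, τ (f u) w = τ u (g w)) →
      LinearMap.trace ℝ Vp f = LinearMap.trace ℝ Vm g := by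
    intro f g hfg
    rw [trace_eq_sum_repr' b f, trace_eq_sum_repr' cb g]
    apply Finset.sum_congr rfl
    intro β _
    rw [reprτ, crepr, hcb β, hfg]
  have adjQ2 : ∀ u w, τ (Q2 u) w = τ u (Q2' w) := by
    intro u w
    rw [hQ2app, hQ2'app, τs1, τsub1, τs2, τsub2]
    rw [adjA (J.tp e e' u) w, adjA u (J.tm e' e w), adjA u w]
  have mirrorT : ∀ x y, LinearMap.trace ℝ Vm ((J.tm y x) ∘ₗ Q2')
      = LinearMap.trace ℝ Vp (Q2 ∘ₗ (J.tp x y)) := by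
    intro x y
    refine (trMirror (Q2 ∘ₗ (J.tp x y)) ((J.tm y x) ∘ₗ Q2') ?_).symm
    intro u w
    rw [LinearMap.comp_apply, LinearMap.comp_apply, adjQ2, adj]
  -- the Peirce-2 trace bridge
  have memP2 : ∀ z, z ∈ P2 ↔ J.tp e e' z = (2:ℝ) • z := by
    intro z
    rw [hP2, LinearMap.mem_ker, LinearMap.sub_apply, LinearMap.smul_apply, LinearMap.id_apply,
      sub_eq_zero]
  have coordv : ∀ z β, J.tp e e' z = (2:ℝ) • z → β ∉ I2 → b.repr z β = 0 := by
    intro z β hz hβ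
    have h1 : b.repr (J.tp e e' z) β = eig β * b.repr z β := reprA z β
    rw [hz, map_smul, Finsupp.smul_apply, smul_eq_mul] at h1
    have h2 : (eig β - 2) * b.repr z β = 0 := by linear_combination -h1
    rcases mul_eq_zero.mp h2 with h | h
    · exact ((heig_ne2 β hβ) (by linarith)).elim
    · exact h
  have trRes : ∀ (f : Vp →ₗ[ℝ] Vp) (hm : ∀ z ∈ P2, f z ∈ P2),
      LinearMap.trace ℝ P2 (f.restrict hm) = ∑ β ∈ I2, b.repr (f (b β)) β := by
    intro f hm
    have hmem : ∀ α : {α // α ∈ I2}, b α.1 ∈ P2 := fun α => (memP2 _).mpr (hc2 α.1 α.2)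
    set v : {α // α ∈ I2} → P2 := fun α => ⟨b α.1, hmem α⟩ with hv
    have liv : LinearIndependent ℝ v := by
      have h1 : LinearIndependent ℝ (fun α : {α // α ∈ I2} => b α.1) :=
        b.linearIndependent.comp _ Subtype.val_injective
      exact LinearIndependent.of_comp P2.subtype h1
    have spanv : ⊤ ≤ Submodule.span ℝ (Set.range v) := by
      rintro ⟨z, hz⟩ -
      have hz2 := (memP2 z).mp hz
      have hrepr : z = ∑ α ∈ I2, b.repr z α • b α := by
        conv_lhs => rw [← b.sum_repr z]
        exact (Finset.sum_subset (Finset.subset_univ I2)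
          (fun β _ hβ => by rw [coordv z β hz2 hβ, zero_smul])).symm
      have hzeq : (⟨z, hz⟩ : P2) = ∑ α ∈ I2.attach, b.repr z α.1 • v α := by
        apply Subtype.ext
        simp only [hv, AddSubmonoidClass.coe_finset_sum, SetLike.val_smul]
        rw [Finset.sum_attach I2 (fun α => b.repr z α • b α)]
        exact hrepr
      rw [hzeq]
      exact Submodule.sum_mem _ fun α _ =>
        Submodule.smul_mem _ _ (Submodule.subset_span ⟨α, rfl⟩)
    let b2 : Module.Basis {α // α ∈ I2} ℝ P2 := Module.Basis.mk liv spanv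
    have hb2 : ∀ α, b2 α = v α := fun α => congrFun (Module.Basis.coe_mk liv spanv) α
    have b2repr : ∀ (s : P2) α, b2.repr s α = b.repr s.1 α.1 := by
      intro s α
      have hop : (b2.coord α) = (b.coord α.1) ∘ₗ P2.subtype := by
        apply b2.ext; intro γ
        simp only [Module.Basis.coord_apply, LinearMap.comp_apply, Submodule.coe_subtype]
        rw [Module.Basis.repr_self_apply, hb2 γ]
        simp only [hv]
        rw [Module.Basis.repr_self_apply]
        exact if_congr Subtype.ext_iff rfl rfl
      have := LinearMap.congr_fun hop s
      simpa only [Module.Basis.coord_apply, LinearMap.comp_apply, Submodule.coe_subtype] using this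
    rw [trace_eq_sum_repr' b2]
    have hterm : ∀ α : {α // α ∈ I2},
        b2.repr ((f.restrict hm) (b2 α)) α = b.repr (f (b α.1)) α.1 := by
      intro α
      rw [b2repr]
      congr 1
      rw [hb2 α]
      simp [hv, LinearMap.restrict_apply]
    rw [Finset.sum_congr rfl (fun α _ => hterm α)]
    exact Finset.sum_coe_sort I2 (fun β => b.repr (f (b β)) β)
  have hp2tr : ∀ (u : Vp) (v : Vm), J.tp e e' u = (2:ℝ) • u → J.tm e' e v = (2:ℝ) • v →
      LinearMap.trace ℝ Vp (Q2 ∘ₗ J.tp u v) = 2 * p2 * τ u v := by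
    intro u v hu hv
    have hmaps : ∀ z ∈ P2, J.tp u v z ∈ P2 := by
      intro z hz
      rw [memP2] at hz ⊢
      have := Pp 2 2 2 u v z hu hv hz
      rwa [show (2:ℝ) - 2 + 2 = 2 by norm_num] at this
    have h := hp2def u v hu hv hmaps
    rw [trRes (J.tp u v) hmaps] at h
    rw [trQ2 (J.tp u v)]
    exact h
  -- the fundamental-formula-type identity
  have FLpt : ∀ x y z, J.tm e' (J.tp x y z) e'
      = (2:ℝ) • J.tm (J.tm y x e') z e' - J.tm y x (J.tm e' z e') := by
    intro x y z
    have h := J.jp_m y x e' z e'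
    rw [J.symm_m e' z (J.tm y x e')] at h
    linear_combination (norm := module) h
  -- diagonal Peirce blocks
  have keyDiag : ∀ (i : ℝ) x y, J.tp e e' x = i • x → J.tm e' e y = i • y →
      LinearMap.trace ℝ Vp (Q2 ∘ₗ J.tp x y) = p2 * τ (J.tp e e' x) y := by
    intro i x y hx hy
    have hv' : J.tm e' e (J.tm y x e') = (2:ℝ) • J.tm y x e' := by
      have h := Pm i i 2 y x e' hy hx h2e'
      rwa [show i - i + 2 = (2:ℝ) by ring] at h
    set Rv : Vp →ₗ[ℝ] Vm := (J.tm (J.tm y x e')).flip e' with hRvdef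
    have hRvapp : ∀ z, Rv z = J.tm (J.tm y x e') z e' := by
      intro z; rw [hRvdef]; simp [LinearMap.flip_apply]
    have OL : Qe' ∘ₗ J.tp x y = Rv - (J.tm y x) ∘ₗ Qe' := by
      apply LinearMap.ext; intro z
      simp only [LinearMap.comp_apply, LinearMap.sub_apply]
      rw [hQe'app, hQe'app, FLpt x y z, hRvapp, map_smul]
      module
    have OR : (2:ℝ) • Rv = Qe' ∘ₗ J.tp e (J.tm y x e') + (J.tm (J.tm y x e') e) ∘ₗ Qe' := by
      apply LinearMap.ext; intro z
      simp only [LinearMap.comp_apply, LinearMap.add_apply, LinearMap.smul_apply]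
      rw [hQe'app, hQe'app, FLpt e (J.tm y x e') z, hRvapp]
      rw [show J.tm (J.tm y x e') e e' = J.tm e' e (J.tm y x e') from J.symm_m _ _ _]
      rw [hv']
      simp only [map_smul, LinearMap.smul_apply]
      module
    have hcomp : Q2 ∘ₗ J.tp x y = Qe ∘ₗ Rv - Qe ∘ₗ ((J.tm y x) ∘ₗ Qe') := by
      apply LinearMap.ext; intro z
      have h2 := LinearMap.congr_fun OL z
      simp only [LinearMap.comp_apply, LinearMap.sub_apply] at h2 ⊢
      rw [← hQQ, LinearMap.comp_apply, h2, map_sub]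
    have hT2 : LinearMap.trace ℝ Vp (Qe ∘ₗ ((J.tm y x) ∘ₗ Qe'))
        = LinearMap.trace ℝ Vp (Q2 ∘ₗ J.tp x y) := by
      rw [LinearMap.trace_comp_comm' ((J.tm y x) ∘ₗ Qe') Qe]
      rw [LinearMap.comp_assoc, hQQ']
      exact mirrorT x y
    have hT1 : LinearMap.trace ℝ Vp (Qe ∘ₗ Rv) = 2 * p2 * τ e (J.tm y x e') := by
      have hOR := congrArg (fun f : Vp →ₗ[ℝ] Vm => LinearMap.trace ℝ Vp (Qe ∘ₗ f)) OR
      have e1 : Qe ∘ₗ ((2:ℝ) • Rv) = (2:ℝ) • (Qe ∘ₗ Rv) := by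
        apply LinearMap.ext; intro z
        simp [LinearMap.comp_apply, map_smul]
      have e2 : Qe ∘ₗ (Qe' ∘ₗ J.tp e (J.tm y x e') + (J.tm (J.tm y x e') e) ∘ₗ Qe')
          = Qe ∘ₗ (Qe' ∘ₗ J.tp e (J.tm y x e')) + Qe ∘ₗ ((J.tm (J.tm y x e') e) ∘ₗ Qe') := by
        apply LinearMap.ext; intro z
        simp [LinearMap.comp_apply, map_add]
      rw [e1, e2, map_smul, map_add] at hOR
      have e3 : Qe ∘ₗ (Qe' ∘ₗ J.tp e (J.tm y x e')) = Q2 ∘ₗ J.tp e (J.tm y x e') := by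
        rw [← LinearMap.comp_assoc, hQQ]
      have e4 : LinearMap.trace ℝ Vp (Qe ∘ₗ ((J.tm (J.tm y x e') e) ∘ₗ Qe'))
          = LinearMap.trace ℝ Vp (Q2 ∘ₗ J.tp e (J.tm y x e')) := by
        rw [LinearMap.trace_comp_comm' ((J.tm (J.tm y x e') e) ∘ₗ Qe') Qe,
          LinearMap.comp_assoc, hQQ']
        exact mirrorT e (J.tm y x e')
      rw [e3, e4] at hOR
      rw [hp2tr e (J.tm y x e') h2e hv'] at hOR
      rw [smul_eq_mul] at hOR
      linear_combination hOR / 2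
    have hfin := congrArg (LinearMap.trace ℝ Vp) hcomp
    rw [map_sub, hT1, hT2] at hfin
    have hτev : τ e (J.tm y x e') = i * τ x y := by
      rw [← adj x y e e', J.symm_p x y e, adj e y x e', J.symm_m y e e', hy, τs2]
    have hτAx : τ (J.tp e e' x) y = i * τ x y := by rw [hx, τs1]
    rw [hτAx]
    rw [hτev] at hfin
    linear_combination hfin / 2
  -- off-diagonal Peirce blocks
  have keyOff : ∀ (i j : ℝ) x y, J.tp e e' x = i • x → J.tm e' e y = j • y → i ≠ j →
      LinearMap.trace ℝ Vp (Q2 ∘ₗ J.tp x y) = p2 * τ (J.tp e e' x) y := by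
    intro i j x y hx hy hij
    have hτ0 : τ x y = 0 := by
      have h1 : i * τ x y = j * τ x y := by
        rw [← τs1, ← hx, adjA, hy, τs2]
      rcases mul_eq_zero.mp (show (i - j) * τ x y = 0 by linear_combination h1) with h | h
      · exact (hij (by linarith)).elim
      · exact h
    have hL : ∀ β ∈ I2, b.repr (J.tp x y (b β)) β = 0 := by
      intro β hβ
      have hw := Pp i j 2 x y (b β) hx hy (hc2 β hβ)
      have h1 : b.repr (J.tp e e' (J.tp x y (b β))) β
          = eig β * b.repr (J.tp x y (b β)) β := reprA _ β
      rw [hw, map_smul, Finsupp.smul_apply, smul_eq_mul, heig2 β hβ] at h1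
      rcases mul_eq_zero.mp
        (show (i - j) * b.repr (J.tp x y (b β)) β = 0 by linear_combination h1) with h | h
      · exact (hij (by linarith)).elim
      · exact h
    rw [trQ2, Finset.sum_congr rfl hL, hx, τs1, hτ0]
    simp
  -- bilinearity of the trace pairing
  have bilin1 : ∀ x x' y, LinearMap.trace ℝ Vp (Q2 ∘ₗ J.tp (x + x') y)
      = LinearMap.trace ℝ Vp (Q2 ∘ₗ J.tp x y) + LinearMap.trace ℝ Vp (Q2 ∘ₗ J.tp x' y) := by
    intro x x' y
    have h : Q2 ∘ₗ J.tp (x + x') y = Q2 ∘ₗ J.tp x y + Q2 ∘ₗ J.tp x' y := by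
      apply LinearMap.ext; intro z
      simp [LinearMap.comp_apply, map_add, LinearMap.add_apply]
    rw [h, map_add]
  have bilin2 : ∀ x y y', LinearMap.trace ℝ Vp (Q2 ∘ₗ J.tp x (y + y'))
      = LinearMap.trace ℝ Vp (Q2 ∘ₗ J.tp x y) + LinearMap.trace ℝ Vp (Q2 ∘ₗ J.tp x y') := by
    intro x y y'
    have h : Q2 ∘ₗ J.tp x (y + y') = Q2 ∘ₗ J.tp x y + Q2 ∘ₗ J.tp x y' := by
      apply LinearMap.ext; intro z
      simp [LinearMap.comp_apply, map_add, LinearMap.add_apply]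
    rw [h, map_add]
  -- the main pairing identity
  have mainPair : ∀ x y, LinearMap.trace ℝ Vp (Q2 ∘ₗ J.tp x y)
      = p2 * τ (J.tp e e' x) y := by
    intro x y
    obtain ⟨x0, x1, x2, hx, hx0, hx1, hx2⟩ := decompP x
    obtain ⟨y0, y1, y2, hy, hy0, hy1, hy2⟩ := decompM y
    rw [hx, hy]
    rw [bilin1, bilin1, bilin2, bilin2, bilin2, bilin2, bilin2, bilin2]
    rw [map_add, map_add, τa1, τa1, τa2, τa2, τa2, τa2, τa2, τa2]
    rw [keyDiag 0 x0 y0 hx0 hy0, keyOff 0 1 x0 y1 hx0 hy1 (by norm_num),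
      keyOff 0 2 x0 y2 hx0 hy2 (by norm_num), keyOff 1 0 x1 y0 hx1 hy0 (by norm_num),
      keyDiag 1 x1 y1 hx1 hy1, keyOff 1 2 x1 y2 hx1 hy2 (by norm_num),
      keyOff 2 0 x2 y0 hx2 hy0 (by norm_num), keyOff 2 1 x2 y1 hx2 hy1 (by norm_num),
      keyDiag 2 x2 y2 hx2 hy2]
    ring
  -- the dual-basis sum pairs like the Peirce-2 trace
  have pairS : ∀ x w, τ ((∑ α ∈ I2, J.tp (b α) (cdual α)) x) w
      = LinearMap.trace ℝ Vp (Q2 ∘ₗ J.tp x w) := by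
    intro x w
    rw [LinearMap.sum_apply, τsum1, trQ2]
    apply Finset.sum_congr rfl
    intro α hα
    rw [J.symm_p (b α) (cdual α) x, adj x (cdual α) (b α) w, J.symm_m (cdual α) x w,
      ← adj x w (b α) (cdual α)]
    exact (reprτ _ α).symm
  -- conclusion
  apply LinearMap.ext
  intro x
  rw [LinearMap.smul_apply]
  have hz : ∀ w, τ ((∑ α ∈ I2, J.tp (b α) (cdual α)) x - p2 • J.tp e e' x) w = 0 := by
    intro w
    rw [τsub1, pairS, mainPair, τs1]
    ring
  exact sub_eq_zero.mp (hnd₂ _ hz)
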